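/- Let Δ̃ be a graph without isolated vertices, ℓ : D(Δ̃) → N a voltage assignment, and Γ̃ the lift of Δ̃ with respect to ℓ. Define v ∼ w iff v and w have the same neighbour sets. Then the following are equivalent: (i) for all vertices u, v, w of Δ̃ with u ∼ v and v ⊥ w, one has ℓ(w,u) = ℓ(w,v); (ii) for all vertices (u,m), (v,n) of Γ̃, one has (u,m) ∼ (v,n) in Γ̃ if and only if m = n and u ∼ v in Δ̃. -/

import Mathlib

/-- The lift of a graph `Δ` with respect to a voltage assignment `ℓ : D(Δ) → N`. -/
def liftGraph {V N : Type*} [Group N] (Δ : SimpleGraph V) (ℓ : V → V → N)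
    (hℓ : ∀ u v, Δ.Adj u v → ℓ u v = (ℓ v u)⁻¹) : SimpleGraph (V × N) where
  Adj p q := Δ.Adj p.1 q.1 ∧ ℓ p.1 q.1 = p.2 * q.2⁻¹
  symm := ⟨by
    rintro ⟨u, m⟩ ⟨v, n⟩ ⟨h1, h2⟩
    exact ⟨h1.symm, by rw [hℓ v u h1.symm, h2]; group⟩⟩
  loopless := ⟨by rintro ⟨u, m⟩ ⟨h, -⟩; exact Δ.irrefl h⟩

lemma liftGraph_mem {V N : Type*} [Group N] (Δ : SimpleGraph V) (ℓ : V → V → N)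
    (hℓ : ∀ u v, Δ.Adj u v → ℓ u v = (ℓ v u)⁻¹) (u w : V) (m k : N) :
    ((w, k) : V × N) ∈ (liftGraph Δ ℓ hℓ).neighborSet (u, m) ↔
      Δ.Adj u w ∧ ℓ u w = m * k⁻¹ := Iff.rfl

/-- for a graph without isolated vertices, the voltage assignment is compatible
with the "same neighbourhood" relation `∼` downstairs iff `∼` upstairs is exactly
"same first coordinate up to `∼`, equal second coordinate". -/
theorem reductive_iff {V N : Type*} [Group N] (Δ : SimpleGraph V)
    (ℓ : V → V → N) (hℓ : ∀ u v, Δ.Adj u v → ℓ u v = (ℓ v u)⁻¹)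
    (hiso : ∀ v : V, ∃ w, Δ.Adj v w) :
    (∀ u v w : V, Δ.neighborSet u = Δ.neighborSet v → Δ.Adj v w → ℓ w u = ℓ w v)
    ↔ (∀ (u v : V) (m n : N),
        ((liftGraph Δ ℓ hℓ).neighborSet (u, m) = (liftGraph Δ ℓ hℓ).neighborSet (v, n)
          ↔ m = n ∧ Δ.neighborSet u = Δ.neighborSet v)) := by
  constructor
  · intro h u v m n
    constructor
    · intro hN
      have hadj : ∀ w, Δ.Adj u w ↔ Δ.Adj v w := by
        intro w
        constructor
        · intro hw
          have h1 : ((w, (ℓ u w)⁻¹ * m) : V × N) ∈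
              (liftGraph Δ ℓ hℓ).neighborSet (u, m) := ⟨hw, by group⟩
          rw [hN] at h1
          exact h1.1
        · intro hw
          have h1 : ((w, (ℓ v w)⁻¹ * n) : V × N) ∈
              (liftGraph Δ ℓ hℓ).neighborSet (v, n) := ⟨hw, by group⟩
          rw [← hN] at h1
          exact h1.1
      have hsets : Δ.neighborSet u = Δ.neighborSet v :=
        Set.ext fun w => by simp only [SimpleGraph.mem_neighborSet]; exact hadj w
      refine ⟨?_, hsets⟩
      obtain ⟨w, hw⟩ := hiso u
      have hw' : Δ.Adj v w := (hadj w).1 hw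
      have h1 : ((w, (ℓ u w)⁻¹ * m) : V × N) ∈
          (liftGraph Δ ℓ hℓ).neighborSet (u, m) := ⟨hw, by group⟩
      rw [hN] at h1
      have h2 : ℓ v w = n * ((ℓ u w)⁻¹ * m)⁻¹ := h1.2
      have h3 : ℓ u w = ℓ v w := by
        rw [hℓ u w hw, hℓ v w hw', h u v w hsets hw']
      rw [← h3] at h2
      rw [mul_inv_rev, inv_inv, ← mul_assoc] at h2
      have h4 : (1 : N) * ℓ u w = (n * m⁻¹) * ℓ u w := by
        rw [one_mul]; exact h2
      have h5 : (1 : N) = n * m⁻¹ := mul_right_cancel h4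
      have h6 : n * m⁻¹ = 1 := h5.symm
      rw [mul_inv_eq_one] at h6
      exact h6.symm
    · rintro ⟨rfl, hs⟩
      ext ⟨w, k⟩
      rw [liftGraph_mem, liftGraph_mem]
      have hadj : Δ.Adj u w ↔ Δ.Adj v w := by
        have := Set.ext_iff.1 hs w
        simpa using this
      constructor
      · rintro ⟨ha, hb⟩
        have ha' : Δ.Adj v w := hadj.1 ha
        refine ⟨ha', ?_⟩
        have h3 : ℓ u w = ℓ v w := by
          rw [hℓ u w ha, hℓ v w ha', h u v w hs ha']
        rw [← h3]; exact hb
      · rintro ⟨ha', hb⟩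
        have ha : Δ.Adj u w := hadj.2 ha'
        refine ⟨ha, ?_⟩
        have h3 : ℓ u w = ℓ v w := by
          rw [hℓ u w ha, hℓ v w ha', h u v w hs ha']
        rw [h3]; exact hb
  · intro h u v w hs hw
    have hN := (h u v 1 1).2 ⟨rfl, hs⟩
    have h1 : ((w, (ℓ v w)⁻¹) : V × N) ∈
        (liftGraph Δ ℓ hℓ).neighborSet (v, (1 : N)) := ⟨hw, by group⟩
    rw [← hN] at h1
    have hadj : Δ.Adj u w := h1.1
    have h2 : ℓ u w = 1 * ((ℓ v w)⁻¹)⁻¹ := h1.2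
    have h3 : ℓ u w = ℓ v w := by rw [h2]; group
    rw [hℓ w u hadj.symm, hℓ w v hw.symm, h3]
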